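/- Let G be a graph of diameter 2 that has a cut-vertex. Then md(G) equals the number of blocks of G. -/

import Mathlib

open SimpleGraph

variable {V : Type*}

/-- Color `i` separates `u` and `v`: there is an edge-cut, all of whose edges
have color `i`, whose removal disconnects `u` from `v`. -/
def separatesColor (G : SimpleGraph V) (Γ : Sym2 V → ℕ) (i : ℕ) (u v : V) : Prop :=
  ∃ F : Set (Sym2 V), F ⊆ G.edgeSet ∧ (∀ e ∈ F, Γ e = i) ∧
    ¬ ((G.deleteEdges F).Reachable u v)

/-- An MD-coloring: every pair of distinct vertices is separated by a
monochromatic edge-cut. -/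
def IsMDColoring (G : SimpleGraph V) (Γ : Sym2 V → ℕ) : Prop :=
  ∀ u v : V, u ≠ v → ∃ i, separatesColor G Γ i u v

/-- The monochromatic disconnection number: the maximum number of colors
used by an MD-coloring. -/
noncomputable def mdNumber (G : SimpleGraph V) : ℕ :=
  sSup {k | ∃ Γ : Sym2 V → ℕ, IsMDColoring G Γ ∧ (Γ '' G.edgeSet).ncard = k}

/-- The induced subgraph on `B` has no cut-vertex. -/
def NoCutVertexOn (G : SimpleGraph V) (B : Set V) : Prop :=
  ∀ v ∈ B, (G.induce (B \ {v})).Connected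

/-- `B` is the vertex set of a block of `G`: a maximal connected subgraph
without a cut-vertex (on at least two vertices). -/
def IsBlockSet (G : SimpleGraph V) (B : Set V) : Prop :=
  2 ≤ B.ncard ∧ (G.induce B).Connected ∧ NoCutVertexOn G B ∧
    ∀ B' : Set V, B ⊆ B' → 2 ≤ B'.ncard → (G.induce B').Connected →
      NoCutVertexOn G B' → B = B'

/-! ### Auxiliary machinery -/

/-- The restriction of `G` to a vertex set `A`, as a graph on the same vertex type. -/
def mdRes (G : SimpleGraph V) (A : Set V) : SimpleGraph V where
  Adj x y := G.Adj x y ∧ x ∈ A ∧ y ∈ A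
  symm := ⟨fun x y ⟨h, hx, hy⟩ => ⟨h.symm, hy, hx⟩⟩
  loopless := ⟨fun x h => G.loopless.irrefl x h.1⟩

lemma mdRes_le (G : SimpleGraph V) {A B : Set V} (h : A ⊆ B) :
    mdRes G A ≤ mdRes G B := fun _ _ ha => ⟨ha.1, h ha.2.1, h ha.2.2⟩

lemma mdRes_reach_mono (G : SimpleGraph V) {A B : Set V} (h : A ⊆ B) {x y : V}
    (hr : (mdRes G A).Reachable x y) : (mdRes G B).Reachable x y :=
  hr.mono (mdRes_le G h)

lemma reach_of_induce_walk (G : SimpleGraph V) {A : Set V} {a b : ↥A}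
    (p : (G.induce A).Walk a b) : (mdRes G A).Reachable a.1 b.1 := by
  induction p with
  | nil => exact Reachable.refl _
  | @cons u c w h p ih =>
      exact (Adj.reachable (show (mdRes G A).Adj u.1 c.1 from ⟨h, u.2, c.2⟩)).trans ih

lemma induce_reach_of_walk (G : SimpleGraph V) {A : Set V} :
    ∀ {x y : V}, (mdRes G A).Walk x y → ∀ (hx : x ∈ A) (hy : y ∈ A),
      (G.induce A).Reachable ⟨x, hx⟩ ⟨y, hy⟩ := by
  intro x y p
  induction p with
  | nil => intro hx hy; exact Reachable.refl _
  | @cons u c w h p ih =>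
      intro hx hy
      exact (Adj.reachable (show (G.induce A).Adj ⟨u, hx⟩ ⟨c, h.2.2⟩ from h.1)).trans
        (ih h.2.2 hy)

lemma induce_connected_iff (G : SimpleGraph V) (A : Set V) :
    (G.induce A).Connected ↔ A.Nonempty ∧ ∀ x ∈ A, ∀ y ∈ A, (mdRes G A).Reachable x y := by
  constructor
  · intro h
    refine ⟨Set.nonempty_coe_sort.mp h.nonempty, fun x hx y hy => ?_⟩
    obtain ⟨p⟩ := h.preconnected ⟨x, hx⟩ ⟨y, hy⟩
    exact reach_of_induce_walk G p
  · rintro ⟨hne, h⟩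
    rw [connected_iff]
    refine ⟨fun a b => ?_, Set.nonempty_coe_sort.mpr hne⟩
    obtain ⟨p⟩ := h a.1 a.2 b.1 b.2
    have := induce_reach_of_walk G p a.2 b.2
    simpa using this

lemma not_reachable_of_isolated {H : SimpleGraph V} {a z : V}
    (h : ∀ b, ¬ H.Adj a b) (hz : a ≠ z) : ¬ H.Reachable a z := by
  rintro ⟨p⟩
  cases p with
  | nil => exact hz rfl
  | cons hadj _ => exact h _ hadj

/-- The component of `x` in `G` minus `v`. -/
def mdComp (G : SimpleGraph V) (v x : V) : Set V :=
  {y | (mdRes G {v}ᶜ).Reachable x y}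

lemma mem_mdComp_self (G : SimpleGraph V) (v x : V) : x ∈ mdComp G v x :=
  Reachable.refl _

lemma not_mem_mdComp (G : SimpleGraph V) {v x : V} (hx : x ≠ v) :
    v ∉ mdComp G v x := by
  intro hv
  have hiso : ∀ b, ¬ (mdRes G {v}ᶜ).Adj v b := fun b hb => hb.2.1 rfl
  exact not_reachable_of_isolated hiso (Ne.symm hx) (Reachable.symm hv)

lemma mdComp_subset (G : SimpleGraph V) {v x : V} (hx : x ≠ v) : mdComp G v x ⊆ {v}ᶜ := by
  intro y hy h
  have : y = v := h
  exact not_mem_mdComp G hx (this ▸ hy)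

lemma mdComp_eq_of_reach (G : SimpleGraph V) {v x y : V}
    (h : (mdRes G {v}ᶜ).Reachable x y) : mdComp G v x = mdComp G v y := by
  ext z
  exact ⟨fun hz => (h.symm.trans hz : _), fun hz => (h.trans hz : _)⟩

lemma mdComp_eq_of_mem (G : SimpleGraph V) {v x y : V} (h : y ∈ mdComp G v x) :
    mdComp G v x = mdComp G v y := mdComp_eq_of_reach G h

/-- Walk transfer: a walk in a subgraph all of whose reachable set avoids `v`
gives reachability in `G` minus `v`. -/
lemma reach_res_of_walk (G : SimpleGraph V) {H : SimpleGraph V}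
    (hle : ∀ a b, H.Adj a b → G.Adj a b) (v : V) :
    ∀ {x z : V}, H.Walk x z → (∀ w, H.Reachable x w → w ≠ v) →
      (mdRes G {v}ᶜ).Reachable x z := by
  intro x z p
  induction p with
  | nil => intro _; exact Reachable.refl _
  | @cons a b c hadj p ih =>
      intro h
      have hb : ∀ w, H.Reachable b w → w ≠ v := fun w hw => h w (hadj.reachable.trans hw)
      have hab : (mdRes G {v}ᶜ).Adj a b :=
        ⟨hle _ _ hadj, h a (Reachable.refl _), h b hadj.reachable⟩
      exact hab.reachable.trans (ih hb)

/-- A walk in `G - v` starting in the component of `x` stays in it. -/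
lemma reach_comp_of_walk (G : SimpleGraph V) (v x : V) :
    ∀ {y z : V}, (mdRes G {v}ᶜ).Walk y z → (mdRes G {v}ᶜ).Reachable x y →
      (mdRes G (mdComp G v x)).Reachable y z := by
  intro y z p
  induction p with
  | nil => intro _; exact Reachable.refl _
  | @cons a b c hadj p ih =>
      intro h
      have hb : (mdRes G {v}ᶜ).Reachable x b := h.trans hadj.reachable
      have hab : (mdRes G (mdComp G v x)).Adj a b := ⟨hadj.1, h, hb⟩
      exact hab.reachable.trans (ih hb)

/-! ### The color of a vertex and monochromaticity of blocks -/

section Claims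

variable (G : SimpleGraph V) (Γ : Sym2 V → ℕ) (v : V)

/-- Half of the key claim. -/
lemma md_claim_half (hA : ∀ u, u ≠ v → G.Adj u v) (hΓ : IsMDColoring G Γ)
    {x y : V} (hx : x ≠ v) (hy : y ≠ v) (hxy : G.Adj x y) :
    Γ s(x, v) = Γ s(y, v) ∨ Γ s(x, y) = Γ s(x, v) := by
  obtain ⟨i, F, hFsub, hFmono, hFnr⟩ := hΓ x v hx
  set H := G.deleteEdges F with hH
  have hbd : ∀ a, H.Reachable x a → ∀ b, ¬ H.Reachable x b → G.Adj a b → s(a, b) ∈ F := by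
    intro a ha b hb hab
    by_contra hf
    exact hb (ha.trans (Adj.reachable (SimpleGraph.deleteEdges_adj.mpr ⟨hab, hf⟩)))
  have hxv : s(x, v) ∈ F := hbd x (Reachable.refl _) v hFnr (hA x hx)
  have hcolx : Γ s(x, v) = i := hFmono _ hxv
  by_cases hyS : H.Reachable x y
  · left
    have hyv : s(y, v) ∈ F := hbd y hyS v hFnr (hA y hy)
    rw [hcolx, hFmono _ hyv]
  · right
    have hxyF : s(x, y) ∈ F := hbd x (Reachable.refl _) y hyS hxy
    rw [hcolx, hFmono _ hxyF]

/-- Adjacent non-`v` vertices have the same `v`-color. -/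
lemma md_claim1 (hA : ∀ u, u ≠ v → G.Adj u v) (hΓ : IsMDColoring G Γ)
    {x y : V} (hx : x ≠ v) (hy : y ≠ v) (hxy : G.Adj x y) :
    Γ s(x, v) = Γ s(y, v) := by
  rcases md_claim_half G Γ v hA hΓ hx hy hxy with h1 | h1
  · exact h1
  rcases md_claim_half G Γ v hA hΓ hy hx hxy.symm with h2 | h2
  · exact h2.symm
  rw [← h1, Sym2.eq_swap, h2]

/-- The `v`-color is constant on components of `G - v`. -/
lemma md_col_const (hA : ∀ u, u ≠ v → G.Adj u v) (hΓ : IsMDColoring G Γ) :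
    ∀ {x y : V}, (mdRes G {v}ᶜ).Walk x y → Γ s(x, v) = Γ s(y, v) := by
  intro x y p
  induction p with
  | nil => rfl
  | @cons a b c hadj p ih =>
      have := md_claim1 G Γ v hA hΓ (hadj.2.1 : a ∈ ({v}ᶜ : Set V)) hadj.2.2 hadj.1
      rw [this, ih]

/-- Every edge not touching `v` has the color of its endpoints. -/
lemma md_claim2 (hA : ∀ u, u ≠ v → G.Adj u v) (hΓ : IsMDColoring G Γ)
    {x y : V} (hx : x ≠ v) (hy : y ≠ v) (hxy : G.Adj x y) :
    Γ s(x, y) = Γ s(x, v) := by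
  obtain ⟨i, F, hFsub, hFmono, hFnr⟩ := hΓ x y hxy.ne
  set H := G.deleteEdges F with hH
  have hbd : ∀ a b : V, H.Reachable a x → ¬ H.Reachable b x → ¬ (H.Reachable a b) := by
    intro a b ha hb hr
    exact hb (hr.symm.trans ha)
  have hbnd : ∀ a, H.Reachable x a → ∀ b, ¬ H.Reachable x b → G.Adj a b → s(a, b) ∈ F := by
    intro a ha b hb hab
    by_contra hf
    exact hb (ha.trans (Adj.reachable (SimpleGraph.deleteEdges_adj.mpr ⟨hab, hf⟩)))
  have hxyF : s(x, y) ∈ F := hbnd x (Reachable.refl _) y hFnr hxy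
  have hΓxy : Γ s(x, y) = i := hFmono _ hxyF
  by_cases hvS : H.Reachable x v
  · -- use the component of `y`
    have hbndy : ∀ a, H.Reachable y a → ∀ b, ¬ H.Reachable y b → G.Adj a b → s(a, b) ∈ F := by
      intro a ha b hb hab
      by_contra hf
      exact hb (ha.trans (Adj.reachable (SimpleGraph.deleteEdges_adj.mpr ⟨hab, hf⟩)))
    have hvT : ¬ H.Reachable y v := by
      intro hvT
      exact hFnr (hvS.trans hvT.symm)
    have hyv : s(y, v) ∈ F := hbndy y (Reachable.refl _) v hvT (hA y hy)
    have : Γ s(y, v) = i := hFmono _ hyv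
    rw [hΓxy, ← this, md_claim1 G Γ v hA hΓ hx hy hxy]
  · have hxv : s(x, v) ∈ F := hbnd x (Reachable.refl _) v hvS (hA x hx)
    rw [hΓxy, hFmono _ hxv]

end Claims

/-- Induced subgraph on `insert v T` is connected when all of `T` is adjacent to `v`. -/
lemma md_star_connected (G : SimpleGraph V) (v : V) (hA : ∀ u, u ≠ v → G.Adj u v)
    (T : Set V) (hT : T ⊆ {v}ᶜ) : (G.induce (insert v T)).Connected := by
  rw [induce_connected_iff]
  refine ⟨⟨v, Set.mem_insert _ _⟩, ?_⟩
  have key : ∀ x ∈ insert v T, (mdRes G (insert v T)).Reachable x v := by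
    intro x hx
    rcases hx with rfl | hx
    · exact Reachable.refl _
    · exact Adj.reachable ⟨hA x (hT hx), Set.mem_insert_iff.mpr (Or.inr hx),
        Set.mem_insert _ _⟩
  intro x hx y hy
  exact (key x hx).trans (key y hy).symm


lemma md_contain [Finite V] (G : SimpleGraph V) (v : V) :
    ∀ B' : Set V, 2 ≤ B'.ncard → (G.induce B').Connected → NoCutVertexOn G B' →
      ∃ x, x ≠ v ∧ B' ⊆ insert v (mdComp G v x) := by
  intro B' hn hconn hnc
  by_cases hvB : v ∈ B'
  · have hconn' := hnc v hvB
    rw [induce_connected_iff] at hconn'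
    obtain ⟨⟨x, hxmem⟩, hreach⟩ := hconn'
    have hxv : x ≠ v := fun h => hxmem.2 h
    refine ⟨x, hxv, ?_⟩
    intro y hy
    by_cases hyv : y = v
    · exact hyv ▸ Set.mem_insert _ _
    · have hy' : y ∈ B' \ {v} := ⟨hy, hyv⟩
      have h1 := hreach x hxmem y hy'
      have h2 : (mdRes G {v}ᶜ).Reachable x y := mdRes_reach_mono G (fun z hz => hz.2) h1
      exact Set.mem_insert_iff.mpr (Or.inr h2)
  · have hne : B'.Nonempty := by
      rcases Set.eq_empty_or_nonempty B' with h | h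
      · rw [h] at hn; simp [Set.ncard_empty] at hn
      · exact h
    obtain ⟨x, hxmem⟩ := hne
    have hxv : x ≠ v := fun h => hvB (h ▸ hxmem)
    rw [induce_connected_iff] at hconn
    refine ⟨x, hxv, ?_⟩
    intro y hy
    have h1 := hconn.2 x hxmem y hy
    have hsubAv : B' ⊆ {v}ᶜ := fun z hz h => hvB (by rwa [show z = v from h] at hz)
    have h2 : (mdRes G {v}ᶜ).Reachable x y := mdRes_reach_mono G hsubAv h1
    exact Set.mem_insert_iff.mpr (Or.inr h2)

lemma md_isBlock [Finite V] (G : SimpleGraph V) {v : V} (hA : ∀ u, u ≠ v → G.Adj u v)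
    {x : V} (hx : x ≠ v) : IsBlockSet G (insert v (mdComp G v x)) := by
  have hvnot : v ∉ mdComp G v x := not_mem_mdComp G hx
  have hsubc : mdComp G v x ⊆ {v}ᶜ := mdComp_subset G hx
  refine ⟨?_, ?_, ?_, ?_⟩
  · have h1 : 1 < (insert v (mdComp G v x)).ncard := by
      rw [Set.one_lt_ncard (Set.toFinite _)]
      exact ⟨v, Set.mem_insert _ _, x,
        Set.mem_insert_iff.mpr (Or.inr (mem_mdComp_self G v x)), Ne.symm hx⟩
    omega
  · exact md_star_connected G v hA _ hsubc
  · intro w hw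
    by_cases hwv : w = v
    · rw [hwv]
      rw [Set.insert_diff_self_of_notMem hvnot]
      rw [induce_connected_iff]
      refine ⟨⟨x, mem_mdComp_self G v x⟩, ?_⟩
      intro y hy z hz
      have hy' : (mdRes G {v}ᶜ).Reachable x y := hy
      have hz' : (mdRes G {v}ᶜ).Reachable x z := hz
      obtain ⟨p⟩ := hy'.symm.trans hz'
      exact reach_comp_of_walk G v x p hy'
    · rw [← Set.insert_diff_singleton_comm (Ne.symm hwv)]
      exact md_star_connected G v hA _ (fun z hz => hsubc hz.1)
  · intro B' hBsub hn hconn hnc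
    obtain ⟨x', hx', hsub'⟩ := md_contain G v B' hn hconn hnc
    have hxmem : x ∈ mdComp G v x' := by
      have hxB : x ∈ B' := hBsub (Set.mem_insert_iff.mpr (Or.inr (mem_mdComp_self G v x)))
      rcases Set.mem_insert_iff.mp (hsub' hxB) with h | h
      · exact absurd h hx
      · exact h
    have hcomp : mdComp G v x' = mdComp G v x := mdComp_eq_of_mem G hxmem
    exact Set.Subset.antisymm hBsub (hcomp ▸ hsub')

theorem stmt_14 [Fintype V] (G : SimpleGraph V) (hG : G.Connected)
    (hdiam : ∀ u v : V, G.dist u v ≤ 2)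
    (hcut : ∃ v : V, ¬ (G.induce {v}ᶜ).Connected) :
    mdNumber G = {B : Set V | IsBlockSet G B}.ncard := by
  classical
  obtain ⟨v, hv⟩ := hcut
  by_cases hsub : ∀ u : V, u = v
  · -- degenerate one-vertex case
    have hedge : G.edgeSet = ∅ := by
      ext e
      refine e.ind (fun a b => ?_)
      simp only [SimpleGraph.mem_edgeSet, Set.mem_empty_iff_false, iff_false]
      intro h
      exact G.loopless.irrefl v (by rwa [hsub a, hsub b] at h)
    have hmd : mdNumber G = 0 := by
      have : {k | ∃ Γ : Sym2 V → ℕ, IsMDColoring G Γ ∧ (Γ '' G.edgeSet).ncard = k} = {0} := by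
        ext k
        simp only [Set.mem_setOf_eq, Set.mem_singleton_iff]
        constructor
        · rintro ⟨Γ, _, hk⟩
          rw [← hk, hedge]
          simp
        · rintro rfl
          exact ⟨fun _ => 0, fun u w huw => absurd ((hsub u).trans (hsub w).symm) huw, by
            rw [hedge]; simp⟩
      rw [mdNumber, this, csSup_singleton]
    have hbl : {B : Set V | IsBlockSet G B} = ∅ := by
      ext B
      simp only [Set.mem_setOf_eq, Set.mem_empty_iff_false, iff_false]
      rintro ⟨h2, -, -, -⟩
      have hBsub : B ⊆ {v} := fun x _ => (hsub x) ▸ rfl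
      have := Set.ncard_le_ncard hBsub (Set.finite_singleton v)
      rw [Set.ncard_singleton] at this
      omega
    rw [hmd, hbl]
    simp
  · push_neg at hsub
    obtain ⟨u₀, hu₀⟩ := hsub
    -- the disconnection pair
    have hAvne : ({v}ᶜ : Set V).Nonempty := ⟨u₀, hu₀⟩
    have hpair : ∃ x ∈ ({v}ᶜ : Set V), ∃ y ∈ ({v}ᶜ : Set V),
        ¬ (mdRes G {v}ᶜ).Reachable x y := by
      by_contra h
      push_neg at h
      exact hv ((induce_connected_iff G _).mpr ⟨hAvne, h⟩)
    obtain ⟨x₀, hx₀, y₀, hy₀, hxy₀⟩ := hpair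
    -- every vertex other than v is adjacent to v
    have hA : ∀ u, u ≠ v → G.Adj u v := by
      intro u hu
      have hz : ∃ z, z ≠ v ∧ ¬ (mdRes G {v}ᶜ).Reachable u z := by
        by_cases h1 : (mdRes G {v}ᶜ).Reachable u x₀
        · refine ⟨y₀, hy₀, fun h2 => hxy₀ (h1.symm.trans h2)⟩
        · exact ⟨x₀, hx₀, h1⟩
      obtain ⟨z, hzv, hz⟩ := hz
      have hzu : u ≠ z := by rintro rfl; exact hz (Reachable.refl _)
      obtain ⟨p, hp⟩ := (hG.preconnected u z).exists_walk_length_eq_dist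
      have hlen : p.length ≤ 2 := hp ▸ hdiam u z
      cases p with
      | nil => exact absurd rfl hzu
      | @cons _ m _ h q =>
        cases q with
        | nil => exact absurd ((show (mdRes G {v}ᶜ).Adj _ _ from ⟨h, hu, hzv⟩).reachable) hz
        | @cons _ m' _ h2 q2 =>
          cases q2 with
          | nil =>
            by_cases hm : m = v
            · exact hm ▸ h
            · exact absurd (((show (mdRes G {v}ᶜ).Adj _ _ from ⟨h, hu, hm⟩).reachable).trans
                ((show (mdRes G {v}ᶜ).Adj _ _ from ⟨h2, hm, hzv⟩).reachable)) hz
          | cons h3 q3 => simp [SimpleGraph.Walk.length_cons] at hlen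
    -- the set of components of G - v
    set C : Set (Set V) := {S | ∃ x, x ≠ v ∧ S = mdComp G v x} with hC
    have hCfin : C.Finite := Set.toFinite _
    have hblocks : {B : Set V | IsBlockSet G B} = (insert v) '' C := by
      ext B
      simp only [Set.mem_setOf_eq, Set.mem_image]
      constructor
      · intro hB
        obtain ⟨x, hx, hsub⟩ := md_contain G v B hB.1 hB.2.1 hB.2.2.1
        have hBi := md_isBlock G hA hx
        have heq := hB.2.2.2 _ hsub hBi.1 hBi.2.1 hBi.2.2.1
        exact ⟨mdComp G v x, ⟨x, hx, rfl⟩, heq.symm⟩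
      · rintro ⟨S, ⟨x, hx, rfl⟩, rfl⟩
        exact md_isBlock G hA hx
    have hinj : Set.InjOn (insert v) C := by
      rintro S ⟨x, hx, rfl⟩ T ⟨y, hy, rfl⟩ h
      have h1 : v ∉ mdComp G v x := not_mem_mdComp G hx
      have h2 : v ∉ mdComp G v y := not_mem_mdComp G hy
      rw [← Set.insert_diff_self_of_notMem h1, ← Set.insert_diff_self_of_notMem h2, h]
    have hbn : {B : Set V | IsBlockSet G B}.ncard = C.ncard := by
      rw [hblocks, Set.ncard_image_of_injOn hinj]
    rw [hbn]
    -- upper bound : any MD-coloring uses at most C.ncard colors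
    have hub : ∀ Γ : Sym2 V → ℕ, IsMDColoring G Γ → (Γ '' G.edgeSet).ncard ≤ C.ncard := by
      intro Γ hΓ
      have hsubim : Γ '' G.edgeSet ⊆ (fun S => sSup ((fun z => Γ s(z, v)) '' S)) '' C := by
        rintro c ⟨e, he, rfl⟩
        revert he
        refine Sym2.ind (fun a b => ?_) e
        intro he
        have hab : G.Adj a b := G.mem_edgeSet.mp he
        have key : ∀ t : V, t ≠ v →
            Γ s(t, v) = sSup ((fun z => Γ s(z, v)) '' (mdComp G v t)) := by
          intro t ht
          have him : (fun z => Γ s(z, v)) '' (mdComp G v t) = {Γ s(t, v)} := by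
            apply Set.eq_singleton_iff_unique_mem.mpr
            constructor
            · exact ⟨t, mem_mdComp_self G v t, rfl⟩
            · rintro c' ⟨z, hz, rfl⟩
              obtain ⟨p⟩ := (hz : (mdRes G {v}ᶜ).Reachable t z)
              exact (md_col_const G Γ v hA hΓ p).symm
          rw [him, csSup_singleton]
        by_cases hav : a = v
        · have hab' : G.Adj v b := hav ▸ hab
          have hbv : b ≠ v := fun h => G.loopless.irrefl v (h ▸ hab')
          refine ⟨mdComp G v b, ⟨b, hbv, rfl⟩, ?_⟩
          show sSup ((fun z => Γ s(z, v)) '' (mdComp G v b)) = Γ s(a, b)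
          rw [← key b hbv, hav, Sym2.eq_swap]
        · by_cases hbv : b = v
          · refine ⟨mdComp G v a, ⟨a, hav, rfl⟩, ?_⟩
            show sSup ((fun z => Γ s(z, v)) '' (mdComp G v a)) = Γ s(a, b)
            rw [← key a hav, hbv]
          · refine ⟨mdComp G v a, ⟨a, hav, rfl⟩, ?_⟩
            show sSup ((fun z => Γ s(z, v)) '' (mdComp G v a)) = Γ s(a, b)
            rw [← key a hav]
            exact (md_claim2 G Γ v hA hΓ hav hbv hab).symm
      calc (Γ '' G.edgeSet).ncard
          ≤ ((fun S => sSup ((fun z => Γ s(z, v)) '' S)) '' C).ncard :=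
            Set.ncard_le_ncard hsubim (hCfin.image _)
        _ ≤ C.ncard := Set.ncard_image_le hCfin
    -- the canonical coloring achieving C.ncard colors
    obtain ⟨gS, hgS⟩ := Countable.exists_injective_nat (Set V)
    set h0 : V → ℕ := fun a => if a = v then 0 else gS (mdComp G v a) + 1 with hh0
    set Γ0 : Sym2 V → ℕ :=
      Sym2.lift ⟨fun a b => max (h0 a) (h0 b), fun a b => max_comm _ _⟩ with hΓ0def
    have hΓ0eval : ∀ a b : V, Γ0 s(a, b) = max (h0 a) (h0 b) := fun a b => by
      rw [hΓ0def, Sym2.lift_mk]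
    have hΓ0edge : ∀ a b : V, G.Adj a b → a ≠ v → Γ0 s(a, b) = gS (mdComp G v a) + 1 := by
      intro a b hab ha
      by_cases hb : b = v
      · subst hb
        rw [hΓ0eval]
        simp [hh0, ha]
      · have hcc : mdComp G v a = mdComp G v b :=
          mdComp_eq_of_reach G ((show (mdRes G {v}ᶜ).Adj a b from ⟨hab, ha, hb⟩).reachable)
        rw [hΓ0eval]
        simp [hh0, ha, hb, hcc]
    have hmain : ∀ t z : V, t ≠ v → t ≠ z →
        ¬ ((G.deleteEdges {e | e ∈ G.edgeSet ∧ Γ0 e = gS (mdComp G v t) + 1}).Reachable t z) := by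
      intro t z ht htz
      apply not_reachable_of_isolated _ htz
      intro b hb
      rw [SimpleGraph.deleteEdges_adj] at hb
      exact hb.2 ⟨G.mem_edgeSet.mpr hb.1, hΓ0edge t b hb.1 ht⟩
    have hmd0 : IsMDColoring G Γ0 := by
      intro p q hpq
      by_cases hpv : p = v
      · refine ⟨gS (mdComp G v q) + 1,
          {e | e ∈ G.edgeSet ∧ Γ0 e = gS (mdComp G v q) + 1},
          fun e he => he.1, fun e he => he.2, fun hr => ?_⟩
        have hqv : q ≠ v := fun h => hpq (hpv.trans h.symm)
        exact hmain q p hqv (fun h => hpq h.symm) hr.symm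
      · exact ⟨gS (mdComp G v p) + 1,
          {e | e ∈ G.edgeSet ∧ Γ0 e = gS (mdComp G v p) + 1},
          fun e he => he.1, fun e he => he.2, hmain p q hpv hpq⟩
    have him0 : Γ0 '' G.edgeSet = (fun S => gS S + 1) '' C := by
      ext c
      constructor
      · rintro ⟨e, he, rfl⟩
        revert he
        refine Sym2.ind (fun a b => ?_) e
        intro he
        have hab : G.Adj a b := G.mem_edgeSet.mp he
        by_cases hav : a = v
        · have hab' : G.Adj v b := hav ▸ hab
          have hbv : b ≠ v := fun h => G.loopless.irrefl v (h ▸ hab')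
          refine ⟨mdComp G v b, ⟨b, hbv, rfl⟩, ?_⟩
          show gS (mdComp G v b) + 1 = Γ0 s(a, b)
          rw [← hΓ0edge b v hab'.symm hbv, hav, Sym2.eq_swap]
        · exact ⟨mdComp G v a, ⟨a, hav, rfl⟩, (hΓ0edge a b hab hav).symm⟩
      · rintro ⟨S, ⟨x, hx, rfl⟩, rfl⟩
        exact ⟨s(x, v), G.mem_edgeSet.mpr (hA x hx), hΓ0edge x v (hA x hx) hx⟩
    have hN : (Γ0 '' G.edgeSet).ncard = C.ncard := by
      rw [him0]
      exact Set.ncard_image_of_injOn (fun S _ T _ h => hgS (Nat.add_right_cancel h))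
    simp only [mdNumber]
    apply le_antisymm
    · refine csSup_le ⟨C.ncard, Γ0, hmd0, hN⟩ ?_
      rintro k ⟨Γ, hΓ, rfl⟩
      exact hub Γ hΓ
    · exact le_csSup ⟨C.ncard, fun k hk => by
        obtain ⟨Γ, hΓ, rfl⟩ := hk; exact hub Γ hΓ⟩ ⟨Γ0, hmd0, hN⟩
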